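/- Fix a ∈ ℝ^n with all entries a_i nonzero, and define f(x) = Σ_{i=1}^n x_i^2 (x_i − a_i)^2 + Σ_{1 ≤ i < j ≤ n} x_i^2 x_j^2. Then f has no spurious minimizers: every local minimizer z of f satisfies f(z) = 0, i.e., z ∈ {0, a_1 e_1, ..., a_n e_n}. -/

import Mathlib

set_option maxHeartbeats 1000000

open Finset Filter Topology

-- endgame arithmetic
lemma my_endgame (y r b c K : ℝ) (hy : y ≠ 0) (hr : r ≠ 0) (hK : 0 ≤ K)
    (E1 : r^2 + K + b^2 - 3*y*b + 2*y^2 = 0)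
    (E2 : y^2 + K + c^2 - 3*r*c + 2*r^2 = 0)
    (H : 0 ≤ r^2*K + r^2*b^2 + r^4 - 6*y*r^2*b + y^2*K + y^2*c^2 - 6*y^2*r*c + 8*y^2*r^2 + y^4) :
    False := by
  have hy2 : 0 < y^2 := by positivity
  have hr2 : 0 < r^2 := by positivity
  have hyb : y^2 < y*b := by
    by_contra h
    push_neg at h
    have ha1 : y*(b-y) ≤ 0 := by nlinarith
    have ha2 : y*(b-2*y) ≤ 0 := by nlinarith
    have h6 : 0 ≤ (y*(b-y)) * (y*(b-2*y)) := mul_nonneg_of_nonpos_of_nonpos ha1 ha2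
    nlinarith [h6, E1, hy2, hr2, hK]
  have hrc : r^2 < r*c := by
    by_contra h
    push_neg at h
    have ha1 : r*(c-r) ≤ 0 := by nlinarith
    have ha2 : r*(c-2*r) ≤ 0 := by nlinarith
    have h6 : 0 ≤ (r*(c-r)) * (r*(c-2*r)) := mul_nonneg_of_nonpos_of_nonpos ha1 ha2
    nlinarith [h6, E2, hy2, hr2, hK]
  have hsub : r^2*K + r^2*b^2 + r^4 - 6*y*r^2*b + y^2*K + y^2*c^2 - 6*y^2*r*c + 8*y^2*r^2 + y^4
      = (-3*(y*b)*r^2 - 3*y^2*(r*c) + 4*y^2*r^2)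
        + r^2*(r^2 + K + b^2 - 3*y*b + 2*y^2) + y^2*(y^2 + K + c^2 - 3*r*c + 2*r^2) := by ring
  rw [hsub, E1, E2] at H
  nlinarith [mul_lt_mul_of_pos_right hyb hr2, mul_lt_mul_of_pos_left hrc hy2, mul_pos hy2 hr2, H]

-- quartic local min at 0
lemma my_quartic (c0 c1 c2 c3 c4 : ℝ)
    (h : IsLocalMin (fun t : ℝ => c0 + c1*t + c2*t^2 + c3*t^3 + c4*t^4) 0) :
    c1 = 0 ∧ 0 ≤ c2 := by
  have hd : HasDerivAt (fun t : ℝ => c0 + c1*t + c2*t^2 + c3*t^3 + c4*t^4)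
      (c1*1 + (c2*(2*(0:ℝ)^1) + (c3*(3*(0:ℝ)^2) + c4*(4*(0:ℝ)^3)))) 0 := by
    have h1 : HasDerivAt (fun t : ℝ => t) 1 0 := hasDerivAt_id 0
    have h2 := hasDerivAt_pow 2 (0:ℝ)
    have h3 := hasDerivAt_pow 3 (0:ℝ)
    have h4 := hasDerivAt_pow 4 (0:ℝ)
    have := ((h1.const_mul c1).add ((h2.const_mul c2).add
      ((h3.const_mul c3).add (h4.const_mul c4)))).const_add c0
    exact (this.congr_deriv (by norm_num)).congr_of_eventuallyEq
      (Filter.Eventually.of_forall fun x => by simp only [Pi.add_apply]; ring)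
  have hc1 : c1 = 0 := by
    have hz := h.deriv_eq_zero
    rw [hd.deriv] at hz
    nlinarith [hz]
  refine ⟨hc1, ?_⟩
  have hev : ∀ᶠ t in 𝓝[≠] (0:ℝ), 0 ≤ c2 + c3*t + c4*t^2 := by
    have h2 : ∀ᶠ t in 𝓝[≠] (0:ℝ),
        c0 + c1*0 + c2*0^2 + c3*0^3 + c4*0^4 ≤ c0 + c1*t + c2*t^2 + c3*t^3 + c4*t^4 :=
      (h.filter_mono (nhdsWithin_le_nhds (s := {(0:ℝ)}ᶜ)))
    filter_upwards [h2, self_mem_nhdsWithin] with t ht ht0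
    have htne : t ≠ 0 := ht0
    have ht2 : 0 < t^2 := by positivity
    have : 0 ≤ t^2 * (c2 + c3*t + c4*t^2) := by rw [hc1] at ht; nlinarith [ht]
    nlinarith [this, ht2]
  have hto : Tendsto (fun t : ℝ => c2 + c3*t + c4*t^2) (𝓝[≠] (0:ℝ)) (𝓝 (c2 + c3*0 + c4*0^2)) := by
    apply Tendsto.mono_left _ nhdsWithin_le_nhds
    exact (Continuous.tendsto (by continuity) 0)
  have := ge_of_tendsto hto hev
  nlinarith [this]

-- pair sum identity
lemma my_pair_sum {n : ℕ} (y : Fin n → ℝ) :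
    ∑ i, ∑ j ∈ Finset.Ioi i, y i * y j = ((∑ i, y i)^2 - ∑ i, (y i)^2)/2 := by
  have key := Finset.sum_sum_Ioi_add_eq_sum_sum_off_diag (f := fun i j => y i * y j) (α := Fin n)
  have h1 : ∑ i, ∑ j ∈ Finset.Ioi i, (y j * y i + y i * y j)
      = 2 * ∑ i, ∑ j ∈ Finset.Ioi i, y i * y j := by
    rw [Finset.mul_sum]
    refine Finset.sum_congr rfl fun i _ => ?_
    rw [Finset.mul_sum]
    exact Finset.sum_congr rfl fun j _ => by ring
  have h3 : ∀ i : Fin n, ∑ j ∈ ({i}ᶜ : Finset (Fin n)), y j * y i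
      = (∑ j, y j) * y i - y i * y i := by
    intro i
    have hs := Finset.sum_compl_add_sum ({i} : Finset (Fin n)) (fun j => y j * y i)
    simp only [Finset.sum_singleton] at hs
    rw [Finset.sum_mul]
    linarith [hs]
  rw [h1] at key
  have final : ∑ i : Fin n, ∑ j ∈ ({i}ᶜ : Finset (Fin n)), y j * y i
      = (∑ i, y i)^2 - ∑ i, (y i)^2 := by
    rw [Finset.sum_congr rfl fun i _ => h3 i, Finset.sum_sub_distrib, ← Finset.mul_sum, ← sq]
    congr 1
    exact Finset.sum_congr rfl fun i _ => by ring
  have key2 : 2 * ∑ i, ∑ j ∈ Finset.Ioi i, y i * y j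
      = (∑ i, y i)^2 - ∑ i, (y i)^2 := by
    rw [key]
    convert final using 4
  linarith [key2]

theorem stmt_3 (n : ℕ) (a : Fin n → ℝ) (ha : ∀ i, a i ≠ 0)
    (f : (Fin n → ℝ) → ℝ)
    (hf : ∀ x, f x = ∑ i, (x i) ^ 2 * (x i - a i) ^ 2
        + ∑ i, ∑ j ∈ Finset.Ioi i, (x i) ^ 2 * (x j) ^ 2) :
    ∀ z, IsLocalMin f z → f z = 0 ∧ (z = 0 ∨ ∃ i, z = Pi.single i (a i)) := by
  intro z hz
  -- single-sum form of f
  have hf' : ∀ x : Fin n → ℝ, f x = (∑ i, (x i)^2*(x i - a i)^2)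
      + ((∑ i, (x i)^2)^2 - ∑ i, (x i)^4)/2 := by
    intro x
    have h4 : ∑ i, ((x i)^2)^2 = ∑ i, (x i)^4 := Finset.sum_congr rfl fun i _ => by ring
    rw [hf x, my_pair_sum (fun i => (x i)^2), h4]
  -- local min along any line
  have curve : ∀ d : Fin n → ℝ, IsLocalMin (fun t : ℝ => f (z + t • d)) 0 := by
    intro d
    have hg : ContinuousAt (fun t : ℝ => z + t • d) 0 :=
      (continuous_const.add (continuous_id.smul continuous_const)).continuousAt
    have h0' : (fun t : ℝ => z + t • d) 0 = z := by simp
    have hz' := hz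
    rw [← h0'] at hz'
    exact IsLocalMin.comp_continuous (g := fun t : ℝ => z + t • d) (b := (0:ℝ)) hz' hg
  -- axis first/second order conditions
  have axis : ∀ k : Fin n,
      z k * ((∑ i ∈ Finset.univ.erase k, (z i)^2) + (a k)^2 - 3*(z k)*(a k) + 2*(z k)^2) = 0
      ∧ 0 ≤ (∑ i ∈ Finset.univ.erase k, (z i)^2) + (a k)^2 - 6*(z k)*(a k) + 6*(z k)^2 := by
    intro k
    have hloc := curve ((Pi.single k 1 : Fin n → ℝ))
    have hxk : ∀ t : ℝ, (z + t • (Pi.single k 1 : Fin n → ℝ)) k = z k + t := by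
      intro t; simp
    have hxi : ∀ (t : ℝ) (i : Fin n), i ≠ k → (z + t • (Pi.single k 1 : Fin n → ℝ)) i = z i := by
      intro t i hik
      simp [Pi.single_eq_of_ne hik]
    have hform : (fun t : ℝ => f (z + t • (Pi.single k 1 : Fin n → ℝ)))
        = fun t => ((z k)^2*(z k - a k)^2 + (∑ i ∈ Finset.univ.erase k, (z i)^2*(z i - a i)^2)
            + (((z k)^2 + ∑ i ∈ Finset.univ.erase k, (z i)^2)^2
               - ((z k)^4 + ∑ i ∈ Finset.univ.erase k, (z i)^4))/2)
          + (2*(z k)*(∑ i ∈ Finset.univ.erase k, (z i)^2) + 2*(z k)*(a k)^2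
              - 6*(z k)^2*(a k) + 4*(z k)^3)*t
          + ((∑ i ∈ Finset.univ.erase k, (z i)^2) + (a k)^2 - 6*(z k)*(a k) + 6*(z k)^2)*t^2
          + (4*(z k) - 2*(a k))*t^3 + 1*t^4 := by
      funext t
      rw [hf']
      have e1 : ∑ i, ((z + t • (Pi.single k 1 : Fin n → ℝ)) i)^2 * ((z + t • (Pi.single k 1 : Fin n → ℝ)) i - a i)^2
          = (z k + t)^2*(z k + t - a k)^2 + ∑ i ∈ Finset.univ.erase k, (z i)^2*(z i - a i)^2 := by
        rw [← Finset.add_sum_erase _ _ (Finset.mem_univ k), hxk]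
        congr 1
        exact Finset.sum_congr rfl fun i hi => by rw [hxi t i (Finset.mem_erase.mp hi).1]
      have e2 : ∑ i, ((z + t • (Pi.single k 1 : Fin n → ℝ)) i)^2
          = (z k + t)^2 + ∑ i ∈ Finset.univ.erase k, (z i)^2 := by
        rw [← Finset.add_sum_erase _ _ (Finset.mem_univ k), hxk]
        congr 1
        exact Finset.sum_congr rfl fun i hi => by rw [hxi t i (Finset.mem_erase.mp hi).1]
      have e3 : ∑ i, ((z + t • (Pi.single k 1 : Fin n → ℝ)) i)^4
          = (z k + t)^4 + ∑ i ∈ Finset.univ.erase k, (z i)^4 := by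
        rw [← Finset.add_sum_erase _ _ (Finset.mem_univ k), hxk]
        congr 1
        exact Finset.sum_congr rfl fun i hi => by rw [hxi t i (Finset.mem_erase.mp hi).1]
      rw [e1, e2, e3]
      ring
    rw [hform] at hloc
    obtain ⟨hc1, hc2⟩ := my_quartic _ _ _ _ _ hloc
    exact ⟨by linear_combination hc1 / 2, hc2⟩
  -- no two nonzero coordinates
  have pair : ∀ k l : Fin n, l ≠ k → z k ≠ 0 → z l ≠ 0 → False := by
    intro k l hlk hk hl
    have hlmem : l ∈ Finset.univ.erase k := Finset.mem_erase.mpr ⟨hlk, Finset.mem_univ l⟩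
    have hkmem : k ∈ Finset.univ.erase l := Finset.mem_erase.mpr ⟨(Ne.symm hlk : k ≠ l), Finset.mem_univ k⟩
    set K1 : ℝ := ∑ i ∈ (Finset.univ.erase k).erase l, (z i)^2 with hK1def
    have hK1 : 0 ≤ K1 := Finset.sum_nonneg fun i _ => sq_nonneg _
    -- decompose erase-sums
    have hS1k : ∑ i ∈ Finset.univ.erase k, (z i)^2 = (z l)^2 + K1 :=
      (Finset.add_sum_erase _ _ hlmem).symm
    have hS1l : ∑ i ∈ Finset.univ.erase l, (z i)^2 = (z k)^2 + K1 := by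
      rw [← Finset.add_sum_erase _ _ hkmem, hK1def, Finset.erase_right_comm]
    -- first order conditions
    obtain ⟨hfk, _⟩ := axis k
    obtain ⟨hfl, _⟩ := axis l
    rw [hS1k] at hfk
    rw [hS1l] at hfl
    have E1 : (z l)^2 + K1 + (a k)^2 - 3*(z k)*(a k) + 2*(z k)^2 = 0 := by
      rcases mul_eq_zero.mp hfk with h | h
      · exact absurd h hk
      · linarith [h]
    have E2 : (z k)^2 + K1 + (a l)^2 - 3*(z l)*(a l) + 2*(z l)^2 = 0 := by
      rcases mul_eq_zero.mp hfl with h | h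
      · exact absurd h hl
      · linarith [h]
    -- mixed second order condition
    set d : Fin n → ℝ := fun i => if i = k then z l else if i = l then -(z k) else 0 with hddef
    have hloc := curve d
    have hxk : ∀ t : ℝ, (z + t • d) k = z k + t * z l := by
      intro t; simp [hddef]
    have hxl : ∀ t : ℝ, (z + t • d) l = z l + t * -(z k) := by
      intro t; simp [hddef, hlk]
    have hxi : ∀ (t : ℝ) (i : Fin n), i ≠ k → i ≠ l → (z + t • d) i = z i := by
      intro t i hik hil
      simp [hddef, hik, hil]
    have hform : (fun t : ℝ => f (z + t • d))
        = fun t => ((z k)^2*(z k - a k)^2 + ((z l)^2*(z l - a l)^2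
              + ∑ i ∈ (Finset.univ.erase k).erase l, (z i)^2*(z i - a i)^2)
            + (((z k)^2 + ((z l)^2 + K1))^2
               - ((z k)^4 + ((z l)^4 + ∑ i ∈ (Finset.univ.erase k).erase l, (z i)^4)))/2)
          + (-2*(z k)*(z l)*(a l)^2 + 2*(z k)*(z l)*(a k)^2 + 6*(z k)*(z l)^2*(a l)
              - 2*(z k)*(z l)^3 - 6*(z k)^2*(z l)*(a k) + 2*(z k)^3*(z l))*t
          + ((z l)^2*K1 + (z l)^2*(a k)^2 + (z l)^4 - 6*(z k)*(z l)^2*(a k)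
              + (z k)^2*K1 + (z k)^2*(a l)^2 - 6*(z k)^2*(z l)*(a l)
              + 8*(z k)^2*(z l)^2 + (z k)^4)*t^2
          + (-2*(z l)^3*(a k) + 2*(z k)*(z l)^3 + 2*(z k)^3*(a l) - 2*(z k)^3*(z l))*t^3
          + ((z l)^4 + (z k)^2*(z l)^2 + (z k)^4)*t^4 := by
      funext t
      rw [hf']
      have e1 : ∑ i, ((z + t • d) i)^2 * ((z + t • d) i - a i)^2
          = (z k + t * z l)^2*(z k + t * z l - a k)^2
            + ((z l + t * -(z k))^2*(z l + t * -(z k) - a l)^2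
              + ∑ i ∈ (Finset.univ.erase k).erase l, (z i)^2*(z i - a i)^2) := by
        rw [← Finset.add_sum_erase _ _ (Finset.mem_univ k), hxk,
            ← Finset.add_sum_erase _ _ hlmem, hxl]
        congr 2
        refine Finset.sum_congr rfl fun i hi => ?_
        obtain ⟨hil, hik, _⟩ := Finset.mem_erase.mp hi |>.imp id (fun h => Finset.mem_erase.mp h)
        rw [hxi t i hik hil]
      have e2 : ∑ i, ((z + t • d) i)^2
          = (z k + t * z l)^2 + ((z l + t * -(z k))^2 + K1) := by
        rw [← Finset.add_sum_erase _ _ (Finset.mem_univ k), hxk,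
            ← Finset.add_sum_erase _ _ hlmem, hxl, hK1def]
        congr 2
        refine Finset.sum_congr rfl fun i hi => ?_
        obtain ⟨hil, hik, _⟩ := Finset.mem_erase.mp hi |>.imp id (fun h => Finset.mem_erase.mp h)
        rw [hxi t i hik hil]
      have e3 : ∑ i, ((z + t • d) i)^4
          = (z k + t * z l)^4 + ((z l + t * -(z k))^4
              + ∑ i ∈ (Finset.univ.erase k).erase l, (z i)^4) := by
        rw [← Finset.add_sum_erase _ _ (Finset.mem_univ k), hxk,
            ← Finset.add_sum_erase _ _ hlmem, hxl]
        congr 2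
        refine Finset.sum_congr rfl fun i hi => ?_
        obtain ⟨hil, hik, _⟩ := Finset.mem_erase.mp hi |>.imp id (fun h => Finset.mem_erase.mp h)
        rw [hxi t i hik hil]
      rw [e1, e2, e3]
      ring
    rw [hform] at hloc
    obtain ⟨_, hc2⟩ := my_quartic _ _ _ _ _ hloc
    exact my_endgame (z k) (z l) (a k) (a l) K1 hk hl hK1 E1 E2 hc2
  -- case analysis
  by_cases hall : ∀ i, z i = 0
  · have hz0 : z = 0 := funext fun i => by rw [hall i]; rfl
    constructor
    · rw [hf' z,
        Finset.sum_eq_zero (fun i _ => by rw [hall i]; ring),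
        Finset.sum_eq_zero (fun i _ => by rw [hall i]; ring),
        Finset.sum_eq_zero (fun i _ => by rw [hall i]; ring)]
      norm_num
    · exact Or.inl hz0
  · push_neg at hall
    obtain ⟨k, hk⟩ := hall
    have hothers : ∀ l, l ≠ k → z l = 0 := by
      intro l hl
      by_contra h
      exact pair k l hl hk h
    have hs1 : ∑ i ∈ Finset.univ.erase k, (z i)^2 = 0 :=
      Finset.sum_eq_zero fun i hi => by rw [hothers i (Finset.mem_erase.mp hi).1]; ring
    obtain ⟨h1, h2⟩ := axis k
    rw [hs1] at h1 h2
    have h3 : (a k)^2 - 3*(z k)*(a k) + 2*(z k)^2 = 0 := by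
      rcases mul_eq_zero.mp h1 with h | h
      · exact absurd h hk
      · linarith [h]
    have h4 : (a k - z k) * (a k - 2*z k) = 0 := by linear_combination h3
    rcases mul_eq_zero.mp h4 with h5 | h5
    · have hzk : z k = a k := by linarith
      have hzeq : z = Pi.single k (a k) := by
        funext i
        by_cases hik : i = k
        · subst hik; rw [Pi.single_eq_same]; exact hzk
        · rw [Pi.single_eq_of_ne hik, hothers i hik]
      constructor
      · have e1 : ∑ i, (z i)^2*(z i - a i)^2 = 0 := by
          refine Finset.sum_eq_zero fun i _ => ?_
          by_cases hik : i = k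
          · subst hik; rw [hzk]; ring
          · rw [hothers i hik]; ring
        have e2 : ∑ i, (z i)^2 = (z k)^2 := by
          rw [← Finset.add_sum_erase _ _ (Finset.mem_univ k), hs1, add_zero]
        have e3 : ∑ i, (z i)^4 = (z k)^4 := by
          rw [← Finset.add_sum_erase _ _ (Finset.mem_univ k),
            Finset.sum_eq_zero fun i hi => by rw [hothers i (Finset.mem_erase.mp hi).1]; ring,
            add_zero]
        rw [hf' z, e1, e2, e3]
        ring
      · exact Or.inr ⟨k, hzeq⟩
    · exfalso
      have hexp : a k = 2 * z k := by linarith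
      have h6 : 0 < (z k)^2 := by positivity
      rw [hexp] at h2
      nlinarith [h2, h6]
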